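/- (Laplace operator and the universal Potts partition function.) In the vector space Undir_{n,k}, the Laplace operator applied to the shaved universal Potts partition function evaluated at (−1,1) equals (−1)^k times the universal Potts partition function evaluated at (−1,−1): Δ( ∑_{G∈Υ_{n,k}} Z_{Ĝ}(−1,1)·G ) = (−1)^k ∑_{G∈Υ_{n,k}} Z_G(−1,−1)·G, where Ĝ denotes G with all loops deleted. -/

import Mathlib

open Finset

open scoped Classical Nat

noncomputable section

/-- A directed graph with `n` labeled vertices and `k` labeled edges:
the `ℓ`-th edge is the ordered pair `G ℓ = (a, b)` (an edge from `a` to `b`; loops allowed). -/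
abbrev DG (n k : ℕ) := Fin k → Fin n × Fin n

namespace DG

variable {n k : ℕ}

/-- `step G S a b`: the subgraph of `G` with edge-label set `S` has an edge from `a` to `b`. -/
def step (G : DG n k) (S : Finset (Fin k)) (a b : Fin n) : Prop :=
  ∃ e ∈ S, G e = (a, b)

/-- The subgraph of `G` with edge-label set `S` contains no directed cycle. -/
def Acyclic (G : DG n k) (S : Finset (Fin k)) : Prop :=
  ∀ a : Fin n, ¬ Relation.TransGen (step G S) a a

/-- The edge `e` lies on a directed cycle of the subgraph of `G` with edge set `S`
(equivalently, there is a directed path from the head of `e` back to its tail). -/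
def OnCycle (G : DG n k) (S : Finset (Fin k)) (e : Fin k) : Prop :=
  Relation.ReflTransGen (step G S) (G e).2 (G e).1

/-- Strongly semiconnected: every edge lies on a directed cycle. -/
def SSC (G : DG n k) (S : Finset (Fin k)) : Prop :=
  ∀ e ∈ S, OnCycle G S e

/-- Strongly connected: every ordered pair of vertices is joined by a directed path. -/
def StronglyConnected (G : DG n k) (S : Finset (Fin k)) : Prop :=
  ∀ a b : Fin n, Relation.ReflTransGen (step G S) a b

/-- Adjacency in the underlying undirected graph. -/
def adj (G : DG n k) (S : Finset (Fin k)) (a b : Fin n) : Prop :=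
  ∃ e ∈ S, G e = (a, b) ∨ G e = (b, a)

/-- `β₀`: the number of connected components of the underlying undirected graph
(isolated vertices count as components). -/
def beta0 (G : DG n k) (S : Finset (Fin k)) : ℕ :=
  Nat.card (Quot (adj G S))

/-- `α(H) = (−1)^{#edges}` if `H` is acyclic, `0` otherwise. -/
def alpha (G : DG n k) (S : Finset (Fin k)) : ℤ :=
  if Acyclic G S then (-1) ^ S.card else 0

/-- `σ(H) = (−1)^{β₁}` if `H` is strongly semiconnected, `0` otherwise;
here `β₁ = #edges − n + β₀`, and `(−1)^{#edges − n + β₀} = (−1)^{#edges + n + β₀}`. -/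
def sigma (G : DG n k) (S : Finset (Fin k)) : ℤ :=
  if SSC G S then (-1) ^ (S.card + n + beta0 G S) else 0

/-- The vertex `v` is isolated: incident to no edge. -/
def isolated (G : DG n k) (v : Fin n) : Prop :=
  ∀ e : Fin k, (G e).1 ≠ v ∧ (G e).2 ≠ v

/-- The vertex `v` is a sink: no edge starts at it. -/
def isSink (G : DG n k) (v : Fin n) : Prop :=
  ∀ e : Fin k, (G e).1 ≠ v

end DG
/-- An undirected graph with `n` labeled vertices and `k` labeled edges: the `ℓ`-th edge is
an unordered pair of vertices (loops allowed). -/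
abbrev UG (n k : ℕ) := Fin k → Sym2 (Fin n)

namespace UG

variable {n k : ℕ}

/-- Adjacency in the subgraph of `G` with edge-label set `S`. -/
def adj (G : UG n k) (S : Finset (Fin k)) (a b : Fin n) : Prop :=
  ∃ e ∈ S, G e = s(a, b)

/-- `β₀`: the number of connected components (isolated vertices count as components). -/
def beta0 (G : UG n k) (S : Finset (Fin k)) : ℕ :=
  Nat.card (Quot (adj G S))

/-- The Potts partition function of the subgraph of `G` with edge-label set `E`:
`Z(q,v) = ∑_{H ⊆ G|_E} q^{β₀(H)} v^{#edges of H}`.  The partition function of `G` itself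
is `Zsub G Finset.univ`, and that of `G` with all loops deleted (`Ĝ`) is
`Zsub G {e | G e is not a loop}` (deleting loops changes neither `β₀` of a subgraph
nor the count of its non-loop edges, and a subgraph of `Ĝ` is exactly a subset of the
non-loop edges). -/
def Zsub (G : UG n k) (E : Finset (Fin k)) (q v : ℤ) : ℤ :=
  ∑ S ∈ E.powerset, q ^ beta0 G S * v ^ S.card

/-- The Potts partition function `Z_G(q,v)` of `G`. -/
def Z (G : UG n k) (q v : ℤ) : ℤ :=
  Zsub G Finset.univ q v

end UG

/-- The forgetful map `Γ_{n,k} → Υ_{n,k}` replacing each directed edge by its undirected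
version (labels preserved). -/
def DG.undir {n k : ℕ} (G : DG n k) : UG n k :=
  fun e => s((G e).1, (G e).2)
/-- `Undir_{n,k}`: the ℂ-vector space with basis `Υ_{n,k}`. -/
abbrev US (n k : ℕ) := UG n k →₀ ℂ

namespace UG

/-- Action of `B_p` on a basis graph `G`: identity if the `p`-th edge is not a loop, and
`−∑_{b ≠ a} R_{ab;p} G` if it is a loop at the vertex `a`, where `R_{ab;p} G` replaces the
`p`-th edge by the undirected edge `{a,b}`. -/
noncomputable def Bsingle (n k : ℕ) (p : Fin k) (G : UG n k) : US n k :=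
  if (G p).IsDiag then
    - ∑ b ∈ Finset.univ.filter (fun b => b ≠ (Quot.out (G p)).1),
        Finsupp.single (Function.update G p (s((Quot.out (G p)).1, b))) (1 : ℂ)
  else Finsupp.single G 1

/-- The linear operator `B_p : Undir_{n,k} → Undir_{n,k}`. -/
noncomputable def B (n k : ℕ) (p : Fin k) : US n k →ₗ[ℂ] US n k :=
  Finsupp.lsum ℂ fun G => LinearMap.toSpanSingleton ℂ (US n k) (Bsingle n k p G)

/-- The Laplace operator `Δ = B_1 ⋯ B_k` on `Undir_{n,k}`. -/
noncomputable def Laplace (n k : ℕ) : US n k →ₗ[ℂ] US n k :=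
  (List.ofFn fun p : Fin k => B n k p).prod

end UG

namespace LaplaceAux

/-- replacement set for an edge value -/
noncomputable def cset {n : ℕ} (w : Sym2 (Fin n)) : Finset (Sym2 (Fin n)) :=
  if w.IsDiag then (Finset.univ.filter (fun b => b ≠ (Quot.out w).1)).image
      (fun b => s((Quot.out w).1, b))
  else {w}

noncomputable def eps {n : ℕ} (w : Sym2 (Fin n)) : ℂ := if w.IsDiag then -1 else 1

variable {n k : ℕ}

lemma B_single (p : Fin k) (G : UG n k) (c : ℂ) :
    UG.B n k p (Finsupp.single G c) = c • UG.Bsingle n k p G := by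
  simp [UG.B, Finsupp.sum_single_index, LinearMap.toSpanSingleton_apply]

lemma Bsingle_eq (p : Fin k) (G : UG n k) :
    UG.Bsingle n k p G
      = eps (G p) • ∑ z ∈ cset (G p), Finsupp.single (Function.update G p z) (1 : ℂ) := by
  by_cases h : (G p).IsDiag
  · rw [UG.Bsingle, if_pos h, cset, if_pos h, eps, if_pos h]
    rw [Finset.sum_image]
    · simp
    · intro b hb b' hb' hbb'
      simp only [Finset.coe_filter, Finset.mem_coe, Finset.mem_filter, Set.mem_setOf_eq] at hb hb'
      rcases Sym2.eq_iff.1 hbb' with ⟨_, h2⟩ | ⟨h1, h2⟩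
      · exact h2
      · exact absurd h1.symm hb'.2
  · rw [UG.Bsingle, if_neg h, cset, if_neg h, eps, if_neg h]
    simp [Function.update_eq_self]

end LaplaceAux
namespace LaplaceAux
section
variable {n k : ℕ}

lemma sum_piFinset_update {ι : Type*} [Fintype ι] [DecidableEq ι] {α : Type*} [DecidableEq α]
    {M : Type*} [AddCommMonoid M]
    (t : ι → Finset α) (p : ι) (x0 : α) (h : t p = {x0}) (u : Finset α)
    (F : (ι → α) → M) :
    ∑ H ∈ Fintype.piFinset t, ∑ z ∈ u, F (Function.update H p z)
      = ∑ H ∈ Fintype.piFinset (Function.update t p u), F H := by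
  rw [← Finset.sum_product']
  refine Finset.sum_nbij' (fun Hz => Function.update Hz.1 p Hz.2)
    (fun H => (Function.update H p x0, H p)) ?_ ?_ ?_ ?_ ?_
  · rintro ⟨H, z⟩ hHz
    rw [Finset.mem_product] at hHz
    rw [Fintype.mem_piFinset] at *
    intro e
    by_cases he : e = p
    · subst he; simp [hHz.2]
    · simp [Function.update_of_ne he, hHz.1 e]
  · intro H hH
    rw [Fintype.mem_piFinset] at hH
    rw [Finset.mem_product, Fintype.mem_piFinset]
    constructor
    · intro e
      by_cases he : e = p
      · subst he; simp [h]
      · have := hH e; simpa [Function.update_of_ne he] using this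
    · have := hH p; simpa using this
  · rintro ⟨H, z⟩ hHz
    rw [Finset.mem_product, Fintype.mem_piFinset] at hHz
    have hHp : H p = x0 := by have := hHz.1 p; rw [h] at this; simpa using this
    simp [Function.update_idem, Function.update_self, ← hHp, Function.update_eq_self]
  · intro H hH
    simp [Function.update_idem, Function.update_eq_self]
  · rintro ⟨H, z⟩ _
    rfl

end
end LaplaceAux
namespace LaplaceAux
section
variable {n k : ℕ}

lemma prod_map_B_single (l : List (Fin k)) (hl : l.Nodup) (G : UG n k) :
    (l.map (UG.B n k)).prod (Finsupp.single G 1)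
      = (∏ p ∈ l.toFinset, eps (G p)) •
        ∑ H ∈ Fintype.piFinset (fun e => if e ∈ l then cset (G e) else {G e}),
          Finsupp.single H (1 : ℂ) := by
  induction l with
  | nil =>
      have hpi : Fintype.piFinset (fun e : Fin k => ({G e} : Finset (Sym2 (Fin n)))) = {G} := by
        ext H
        simp [Fintype.mem_piFinset, funext_iff, eq_comm]
      simp [hpi]
  | cons p l ih =>
      rw [List.nodup_cons] at hl
      obtain ⟨hp, hln⟩ := hl
      rw [List.map_cons, List.prod_cons, Module.End.mul_apply, ih hln, map_smul, map_sum]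
      have hstep : ∀ H ∈ Fintype.piFinset
            (fun e => if e ∈ l then cset (G e) else {G e}),
          UG.B n k p (Finsupp.single H (1:ℂ))
            = eps (G p) • ∑ z ∈ cset (G p), Finsupp.single (Function.update H p z) (1:ℂ) := by
        intro H hH
        have hHp : H p = G p := by
          have := Fintype.mem_piFinset.1 hH p
          simpa [hp] using this
        rw [B_single, one_smul, Bsingle_eq, hHp]
      rw [Finset.sum_congr rfl hstep, ← Finset.smul_sum, smul_smul,
        sum_piFinset_update (fun e => if e ∈ l then cset (G e) else {G e}) p (G p)
          (by simp [hp]) (cset (G p)) (fun H => Finsupp.single H (1:ℂ))]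
      congr 1
      · rw [List.toFinset_cons, Finset.prod_insert (by simpa using hp), mul_comm]
      · have ht : Function.update (fun e => if e ∈ l then cset (G e) else {G e}) p (cset (G p))
            = fun e => if e ∈ p :: l then cset (G e) else {G e} := by
          funext e
          by_cases he : e = p
          · subst he; simp
          · simp [Function.update_of_ne he, he]
        rw [ht]

lemma laplace_single (G : UG n k) :
    UG.Laplace n k (Finsupp.single G 1)
      = (∏ p : Fin k, eps (G p)) •
        ∑ H ∈ Fintype.piFinset (fun e => cset (G e)), Finsupp.single H (1:ℂ) := by
  have h := prod_map_B_single (List.finRange k) (List.nodup_finRange k) G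
  rw [UG.Laplace, List.ofFn_eq_map]
  rw [h]
  congr 1
  · rw [List.toFinset_finRange]
  · have ht : (fun e : Fin k => if e ∈ List.finRange k then cset (G e) else {G e})
        = fun e => cset (G e) := by
      funext e
      simp [List.mem_finRange]
    rw [ht]

end
end LaplaceAux
namespace LaplaceAux
section
variable {n k : ℕ}

lemma card_quot_congr {α : Type*} {r s : α → α → Prop}
    (h1 : ∀ a b, r a b → Quot.mk s a = Quot.mk s b)
    (h2 : ∀ a b, s a b → Quot.mk r a = Quot.mk r b) :
    Nat.card (Quot r) = Nat.card (Quot s) :=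
  Nat.card_congr
    { toFun := Quot.lift (Quot.mk s) h1
      invFun := Quot.lift (Quot.mk r) h2
      left_inv := fun q => by induction q using Quot.ind with | _ a => rfl
      right_inv := fun q => by induction q using Quot.ind with | _ a => rfl }

lemma beta0_congr (G H : UG n k) (S : Finset (Fin k)) (h : ∀ e ∈ S, G e = H e) :
    UG.beta0 G S = UG.beta0 H S := by
  refine card_quot_congr ?_ ?_
  · rintro a b ⟨e, he, hGe⟩
    exact Quot.sound ⟨e, he, by rw [← h e he]; exact hGe⟩
  · rintro a b ⟨e, he, hHe⟩
    exact Quot.sound ⟨e, he, by rw [h e he]; exact hHe⟩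

lemma beta0_insert_diag (H : UG n k) (S : Finset (Fin k)) (e0 : Fin k)
    (h : (H e0).IsDiag) :
    UG.beta0 H (insert e0 S) = UG.beta0 H S := by
  refine card_quot_congr ?_ ?_
  · rintro a b ⟨e, he, hHe⟩
    rcases Finset.mem_insert.1 he with rfl | he'
    · have : a = b := by
        rw [hHe] at h
        exact Sym2.mk_isDiag_iff.1 h
      rw [this]
    · exact Quot.sound ⟨e, he', hHe⟩
  · rintro a b ⟨e, he, hHe⟩
    exact Quot.sound ⟨e, Finset.mem_insert_of_mem he, hHe⟩

lemma Z_loop_zero (H : UG n k) (e0 : Fin k) (h : (H e0).IsDiag) :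
    UG.Z H (-1) (-1) = 0 := by
  rw [UG.Z, UG.Zsub,
    show (Finset.univ : Finset (Fin k)) = insert e0 (Finset.univ.erase e0) from
      (Finset.insert_erase (Finset.mem_univ e0)).symm,
    Finset.sum_powerset_insert (Finset.notMem_erase e0 _)]
  rw [← Finset.sum_add_distrib]
  refine Finset.sum_eq_zero fun S hS => ?_
  have he0S : e0 ∉ S := fun hmem =>
    Finset.notMem_erase e0 _ (Finset.mem_powerset.1 hS hmem)
  rw [beta0_insert_diag H S e0 h, Finset.card_insert_of_notMem he0S, pow_succ]
  ring

end
end LaplaceAux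
namespace LaplaceAux
section
variable {n k : ℕ}

lemma mem_cset_not_diag {g z : Sym2 (Fin n)} (hg : ¬ g.IsDiag) :
    z ∈ cset g ↔ z = g := by
  simp [cset, hg]

lemma mem_cset_diag {g z : Sym2 (Fin n)} (hg : g.IsDiag) :
    z ∈ cset g ↔ ∃ b, b ≠ (Quot.out g).1 ∧ z = s((Quot.out g).1, b) := by
  simp [cset, hg, Finset.mem_image, eq_comm]

lemma mk_out_eq (z : Sym2 (Fin n)) :
    s((Quot.out z).1, (Quot.out z).2) = z := by
  exact Quot.out_eq z

lemma diag_eq_out1 {g : Sym2 (Fin n)} (hg : g.IsDiag) :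
    g = s((Quot.out g).1, (Quot.out g).1) := by
  have h1 := mk_out_eq g
  have h2 : (Quot.out g).1 = (Quot.out g).2 := by
    rw [← h1] at hg
    exact Sym2.mk_isDiag_iff.1 hg
  conv_lhs => rw [← h1]
  rw [h2]

lemma out1_mk_diag (a : Fin n) : (Quot.out (s(a, a))).1 = a := by
  have h := mk_out_eq (s(a, a))
  rcases Sym2.eq_iff.1 h with ⟨h1, _⟩ | ⟨h1, _⟩ <;> exact h1

lemma nondiag_mem_cset_diag {g z : Sym2 (Fin n)} (hg : g.IsDiag) (hz : z ∈ cset g) :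
    ¬ z.IsDiag := by
  rcases (mem_cset_diag hg).1 hz with ⟨b, hb, rfl⟩
  exact fun hd => hb (Sym2.mk_isDiag_iff.1 hd).symm

lemma Dset_eq (H : UG n k) (e : Fin k) (hH : ¬ (H e).IsDiag) :
    Finset.univ.filter (fun g => H e ∈ cset g)
      = {H e, s((Quot.out (H e)).1, (Quot.out (H e)).1),
          s((Quot.out (H e)).2, (Quot.out (H e)).2)} := by
  set a := (Quot.out (H e)).1 with ha
  set b := (Quot.out (H e)).2 with hb
  have hHe : s(a, b) = H e := mk_out_eq (H e)
  have hab : a ≠ b := fun hab' => hH (by rw [← hHe]; exact Sym2.mk_isDiag_iff.2 hab')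
  ext g
  simp only [Finset.mem_filter, Finset.mem_univ, true_and, Finset.mem_insert,
    Finset.mem_singleton]
  constructor
  · intro hg
    by_cases hd : g.IsDiag
    · rcases (mem_cset_diag hd).1 hg with ⟨c, _, hzc⟩
      have hgx := diag_eq_out1 hd
      have : s((Quot.out g).1, c) = s(a, b) := by rw [hHe, ← hzc]
      rcases Sym2.eq_iff.1 this with ⟨h1, _⟩ | ⟨h1, _⟩
      · right; left; rw [hgx, h1]
      · right; right; rw [hgx, h1]
    · left; exact ((mem_cset_not_diag hd).1 hg).symm
  · rintro (rfl | rfl | rfl)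
    · exact (mem_cset_not_diag hH).2 rfl
    · refine (mem_cset_diag (Sym2.mk_isDiag_iff.2 rfl)).2 ⟨b, ?_, ?_⟩
      · rw [out1_mk_diag]; exact hab.symm
      · rw [out1_mk_diag]; exact hHe.symm
    · refine (mem_cset_diag (Sym2.mk_isDiag_iff.2 rfl)).2 ⟨a, ?_, ?_⟩
      · rw [out1_mk_diag]; exact hab
      · rw [out1_mk_diag, ← hHe]
        exact Sym2.eq_swap.symm

end
end LaplaceAux
namespace LaplaceAux
section
variable {n k : ℕ}

lemma local_sum (H : UG n k) (hH : ∀ e, ¬ (H e).IsDiag) (S : Finset (Fin k)) (e : Fin k) :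
    ∑ g ∈ Finset.univ.filter (fun g => H e ∈ cset g),
        (if g.IsDiag then (if e ∈ S then (0:ℂ) else -1) else 1)
      = if e ∈ S then 1 else -1 := by
  rw [Dset_eq H e (hH e)]
  set a := (Quot.out (H e)).1 with ha
  set b := (Quot.out (H e)).2 with hb
  have hHe : s(a, b) = H e := mk_out_eq (H e)
  have hab : a ≠ b := fun hab' => hH e (by rw [← hHe]; exact Sym2.mk_isDiag_iff.2 hab')
  have h1 : H e ∉ ({s(a, a), s(b, b)} : Finset (Sym2 (Fin n))) := by
    intro hmem
    rcases Finset.mem_insert.1 hmem with h' | h' <;>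
      [skip; rw [Finset.mem_singleton] at h'] <;>
      exact hH e (by rw [h']; exact Sym2.mk_isDiag_iff.2 rfl)
  have h2 : s(a, a) ∉ ({s(b, b)} : Finset (Sym2 (Fin n))) := by
    rw [Finset.mem_singleton]
    intro h'
    rcases Sym2.eq_iff.1 h' with ⟨h'', _⟩ | ⟨h'', _⟩ <;> exact hab h''
  rw [Finset.sum_insert h1, Finset.sum_insert h2, Finset.sum_singleton,
    if_neg (hH e), if_pos (Sym2.mk_isDiag_iff.2 rfl), if_pos (Sym2.mk_isDiag_iff.2 rfl)]
  by_cases heS : e ∈ S <;> simp [heS]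

lemma inner_sum (H : UG n k) (hH : ∀ e, ¬ (H e).IsDiag) (S : Finset (Fin k)) :
    ∑ G ∈ Fintype.piFinset (fun e => Finset.univ.filter fun g => H e ∈ cset g),
        (if S ⊆ Finset.univ.filter (fun e => ¬ (G e).IsDiag) then
          (∏ e, eps (G e)) * (-1:ℂ) ^ (UG.beta0 G S) else 0)
      = (-1:ℂ) ^ (UG.beta0 H S) * (-1) ^ (k - S.card) := by
  have step : ∀ G ∈ Fintype.piFinset (fun e => Finset.univ.filter fun g => H e ∈ cset g),
      (if S ⊆ Finset.univ.filter (fun e => ¬ (G e).IsDiag) then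
          (∏ e, eps (G e)) * (-1:ℂ) ^ (UG.beta0 G S) else 0)
        = (-1:ℂ) ^ (UG.beta0 H S) *
            ∏ e, (if (G e).IsDiag then (if e ∈ S then (0:ℂ) else -1) else 1) := by
    intro G hG
    have hGmem : ∀ e, H e ∈ cset (G e) := by
      intro e
      have := Fintype.mem_piFinset.1 hG e
      exact (Finset.mem_filter.1 this).2
    by_cases hsub : S ⊆ Finset.univ.filter (fun e => ¬ (G e).IsDiag)
    · have hnd : ∀ e ∈ S, ¬ (G e).IsDiag := fun e he => (Finset.mem_filter.1 (hsub he)).2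
      have hagree : ∀ e ∈ S, G e = H e := fun e he =>
        ((mem_cset_not_diag (hnd e he)).1 (hGmem e)).symm
      rw [if_pos hsub, beta0_congr G H S hagree, mul_comm]
      congr 1
      refine Finset.prod_congr rfl fun e _ => ?_
      by_cases hd : (G e).IsDiag
      · have heS : e ∉ S := fun he => hnd e he hd
        rw [if_pos hd, if_neg heS, eps, if_pos hd]
      · rw [if_neg hd, eps, if_neg hd]
    · rw [if_neg hsub]
      obtain ⟨e, heS, he⟩ := Finset.not_subset.1 hsub
      have hd : (G e).IsDiag := by
        by_contra hnd
        exact he (Finset.mem_filter.2 ⟨Finset.mem_univ e, hnd⟩)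
      rw [Finset.prod_eq_zero (Finset.mem_univ e) (by rw [if_pos hd, if_pos heS]), mul_zero]
  rw [Finset.sum_congr rfl step, ← Finset.mul_sum]
  have hps := Finset.prod_univ_sum (fun e => Finset.univ.filter fun g => H e ∈ cset g)
    (fun e (g : Sym2 (Fin n)) => if g.IsDiag then (if e ∈ S then (0:ℂ) else -1) else 1)
  rw [← hps]
  congr 1
  have hloc : ∀ e : Fin k,
      (∑ g ∈ Finset.univ.filter (fun g => H e ∈ cset g),
        (if g.IsDiag then (if e ∈ S then (0:ℂ) else -1) else 1))
      = if e ∈ S then 1 else -1 := local_sum H hH S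
  rw [Finset.prod_congr rfl fun e _ => hloc e, ← Finset.prod_mul_prod_compl S,
    Finset.prod_congr rfl (fun e he => if_pos he),
    Finset.prod_congr rfl (fun e (he : e ∈ Sᶜ) => if_neg (Finset.mem_compl.1 he)),
    Finset.prod_const_one, one_mul, Finset.prod_const, Finset.card_compl,
    Fintype.card_fin]

lemma key (H : UG n k) :
    ∑ G ∈ Fintype.piFinset (fun e => Finset.univ.filter fun g => H e ∈ cset g),
        (∏ e, eps (G e)) *
          ((UG.Zsub G (Finset.univ.filter fun e => ¬ (G e).IsDiag) (-1) 1 : ℤ) : ℂ)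
      = (-1:ℂ) ^ k * ((UG.Z H (-1) (-1) : ℤ) : ℂ) := by
  by_cases hH : ∀ e, ¬ (H e).IsDiag
  · -- loopless case
    have hpow : ∀ (E : Finset (Fin k)) (f : Finset (Fin k) → ℂ),
        ∑ S ∈ E.powerset, f S = ∑ S : Finset (Fin k), if S ⊆ E then f S else 0 := by
      intro E f
      rw [← Finset.sum_filter]
      congr 1
      ext S; simp [Finset.mem_powerset]
    have hcast : ∀ G : UG n k,
        ((UG.Zsub G (Finset.univ.filter fun e => ¬ (G e).IsDiag) (-1) 1 : ℤ) : ℂ)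
          = ∑ S ∈ (Finset.univ.filter fun e => ¬ (G e).IsDiag).powerset,
              (-1:ℂ) ^ (UG.beta0 G S) := by
      intro G
      rw [UG.Zsub]
      push_cast
      simp
    calc ∑ G ∈ Fintype.piFinset (fun e => Finset.univ.filter fun g => H e ∈ cset g),
            (∏ e, eps (G e)) *
              ((UG.Zsub G (Finset.univ.filter fun e => ¬ (G e).IsDiag) (-1) 1 : ℤ) : ℂ)
        = ∑ G ∈ Fintype.piFinset (fun e => Finset.univ.filter fun g => H e ∈ cset g),
            ∑ S : Finset (Fin k),
              (if S ⊆ Finset.univ.filter (fun e => ¬ (G e).IsDiag) then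
                (∏ e, eps (G e)) * (-1:ℂ) ^ (UG.beta0 G S) else 0) := by
          refine Finset.sum_congr rfl fun G _ => ?_
          rw [hcast G, hpow, Finset.mul_sum]
          exact Finset.sum_congr rfl fun S _ => by rw [mul_ite, mul_zero]
      _ = ∑ S : Finset (Fin k),
            ∑ G ∈ Fintype.piFinset (fun e => Finset.univ.filter fun g => H e ∈ cset g),
              (if S ⊆ Finset.univ.filter (fun e => ¬ (G e).IsDiag) then
                (∏ e, eps (G e)) * (-1:ℂ) ^ (UG.beta0 G S) else 0) := Finset.sum_comm
      _ = ∑ S : Finset (Fin k), (-1:ℂ) ^ (UG.beta0 H S) * (-1) ^ (k - S.card) := by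
          exact Finset.sum_congr rfl fun S _ => inner_sum H hH S
      _ = (-1:ℂ) ^ k * ((UG.Z H (-1) (-1) : ℤ) : ℂ) := by
          rw [UG.Z, UG.Zsub, Finset.powerset_univ]
          push_cast
          rw [Finset.mul_sum]
          refine Finset.sum_congr rfl fun S _ => ?_
          have hs : S.card ≤ k := by
            simpa using Finset.card_le_univ S
          have h2 : (-1:ℂ) ^ (k - S.card) * (-1) ^ S.card = (-1) ^ k := by
            rw [← pow_add]; congr 1; omega
          have h3 : (-1:ℂ) ^ S.card * (-1) ^ S.card = 1 := by
            rw [← pow_add]; exact Even.neg_one_pow ⟨S.card, rfl⟩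
          have h4 : (-1:ℂ) ^ (k - S.card) = (-1) ^ k * (-1) ^ S.card := by
            rw [← h2, mul_assoc, h3, mul_one]
          rw [h4]
          ring
  · -- H has a loop
    push_neg at hH
    obtain ⟨e0, he0⟩ := hH
    have hempty : (Finset.univ.filter fun g => H e0 ∈ cset g) = ∅ := by
      refine Finset.eq_empty_of_forall_notMem fun g hg => ?_
      rw [Finset.mem_filter] at hg
      by_cases hd : g.IsDiag
      · exact nondiag_mem_cset_diag hd hg.2 he0
      · exact hd (by rw [← (mem_cset_not_diag hd).1 hg.2]; exact he0)
    have hpi : Fintype.piFinset (fun e => Finset.univ.filter fun g => H e ∈ cset g) = ∅ := by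
      refine Finset.eq_empty_of_forall_notMem fun G hG => ?_
      have := Fintype.mem_piFinset.1 hG e0
      rw [hempty] at this
      exact absurd this (Finset.notMem_empty _)
    rw [hpi, Finset.sum_empty, Z_loop_zero H e0 he0]
    simp

end
end LaplaceAux
/-- Laplace operator and the universal Potts partition function.
`Δ( ∑_{G∈Υ_{n,k}} Z_{Ĝ}(−1,1)·G ) = (−1)^k ∑_{G∈Υ_{n,k}} Z_G(−1,−1)·G` in `Undir_{n,k}`,
where `Ĝ` is `G` with all loops deleted. -/
theorem laplace_universal_potts (n k : ℕ) :
    UG.Laplace n k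
        (∑ G : UG n k,
          ((UG.Zsub G (Finset.univ.filter fun e => ¬ (G e).IsDiag) (-1) 1 : ℤ) : ℂ)
            • Finsupp.single G (1 : ℂ))
      = (-1 : ℂ) ^ k •
          ∑ G : UG n k, ((UG.Z G (-1) (-1) : ℤ) : ℂ) • Finsupp.single G (1 : ℂ) := by
  classical
  set w : UG n k → ℂ := fun G =>
    (∏ e, LaplaceAux.eps (G e)) *
      ((UG.Zsub G (Finset.univ.filter fun e => ¬ (G e).IsDiag) (-1) 1 : ℤ) : ℂ) with hw
  have h1 : ∀ G : UG n k,
      UG.Laplace n k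
          (((UG.Zsub G (Finset.univ.filter fun e => ¬ (G e).IsDiag) (-1) 1 : ℤ) : ℂ)
            • Finsupp.single G (1 : ℂ))
        = ∑ H : UG n k,
            (if H ∈ Fintype.piFinset (fun e => LaplaceAux.cset (G e)) then w G else 0)
              • Finsupp.single H (1 : ℂ) := by
    intro G
    rw [map_smul, LaplaceAux.laplace_single, smul_smul, mul_comm, Finset.smul_sum]
    rw [show (Fintype.piFinset fun e => LaplaceAux.cset (G e))
        = Finset.univ ∩ (Fintype.piFinset fun e => LaplaceAux.cset (G e)) from
      (Finset.univ_inter _).symm]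
    rw [← Finset.sum_ite_mem]
    simp only [Finset.univ_inter, ite_smul, zero_smul, hw]
  rw [map_sum, Finset.sum_congr rfl fun G _ => h1 G, Finset.sum_comm, Finset.smul_sum]
  refine Finset.sum_congr rfl fun H _ => ?_
  have hset : Finset.univ.filter
        (fun G : UG n k => H ∈ Fintype.piFinset fun e => LaplaceAux.cset (G e))
      = Fintype.piFinset (fun e => Finset.univ.filter fun g => H e ∈ LaplaceAux.cset g) := by
    ext G
    simp [Fintype.mem_piFinset]
  rw [← Finset.sum_smul, Finset.sum_ite, Finset.sum_const_zero, add_zero, hset,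
    LaplaceAux.key H, smul_smul]
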